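/- For every real 3×3 matrix K, the image S = Φ(K) satisfies tr(S³) = −24·det(K). -/

import Mathlib

open Matrix

/-- The equivariant map Φ : ℝ^{3×3} → S²₀(ℝ⁴) of Lemma 3.1 (Madsen–Salamon). -/
def Phi (K : Matrix (Fin 3) (Fin 3) ℝ) : Matrix (Fin 4) (Fin 4) ℝ :=
  Matrix.of
    ![![-K 0 0 - K 1 1 - K 2 2, K 1 2 - K 2 1, -K 0 2 + K 2 0, K 0 1 - K 1 0],
      ![K 1 2 - K 2 1, -K 0 0 + K 1 1 + K 2 2, -K 0 1 - K 1 0, -K 0 2 - K 2 0],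
      ![-K 0 2 + K 2 0, -K 0 1 - K 1 0, K 0 0 - K 1 1 + K 2 2, -K 1 2 - K 2 1],
      ![K 0 1 - K 1 0, -K 0 2 - K 2 0, -K 1 2 - K 2 1, K 0 0 + K 1 1 - K 2 2]]

theorem trace_cube_Phi (K : Matrix (Fin 3) (Fin 3) ℝ) :
    ((Phi K) ^ 3).trace = -24 * K.det := by
  rw [pow_succ, pow_succ, pow_one]
  simp only [Matrix.trace, Matrix.diag, Matrix.mul_apply, Matrix.det_fin_three,
    Fin.sum_univ_four, Phi, Matrix.of_apply]
  norm_num [Matrix.cons_val_zero, Matrix.cons_val_one, Matrix.head_cons,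
    Matrix.cons_val_two, Matrix.cons_val_three, Matrix.tail_cons]
  ring
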